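/- arXiv:2308.13986 — 2 statements merged into one kernel-verified Lean document; each statement's English description precedes it below -/
import Mathlib

section
/- Let V be a finite-dimensional real inner product space of dimension n ≥ 1, let T : V → V be a self-adjoint linear map, and let (u_1, …, u_n) be an orthonormal basis of V with T u_i = λ_i u_i and λ_1 ≤ λ_2 ≤ … ≤ λ_n. Fix 1 ≤ k ≤ n and β ≥ 0, and for u ≠ 0 define the penalized Rayleigh quotient L_k(u) = ⟨T u, u⟩/‖u‖² + β Σ_{j=1}^{k−1} ⟨u, u_j⟩²/‖u‖². Then the infimum of L_k(u) over all nonzero u ∈ V equals min(λ_k, λ_1 + β). -/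
open Finset

/-- For a self-adjoint operator `T` with orthonormal eigenbasis `b` and increasing
eigenvalues `ev`, the infimum over nonzero vectors of the penalized Rayleigh quotient
`L_k(v) = ⟨Tv,v⟩/‖v‖² + β ∑_{j<k} ⟨v, b j⟩²/‖v‖²` (with penalty `β ≥ 0`) equals
`min (ev k) (ev 0 + β)`. -/
theorem penalized_rayleigh_quotient_inf
    {V : Type*} [NormedAddCommGroup V] [InnerProductSpace ℝ V]
    [FiniteDimensional ℝ V]
    (n : ℕ) (hn : 0 < n) (hdim : Module.finrank ℝ V = n)
    (T : V →ₗ[ℝ] V)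
    (hT : ∀ w v : V, (inner ℝ (T w) v : ℝ) = (inner ℝ w (T v) : ℝ))
    (b : OrthonormalBasis (Fin n) ℝ V) (ev : Fin n → ℝ)
    (heig : ∀ i, T (b i) = ev i • b i) (hmono : Monotone ev)
    (k : Fin n) (β : ℝ) (hβ : 0 ≤ β)
    (L : V → ℝ)
    (hL : ∀ v, L v = (inner ℝ (T v) v : ℝ) / ‖v‖ ^ 2
        + β * ∑ j ∈ Finset.Iio k, (inner ℝ v (b j) : ℝ) ^ 2 / ‖v‖ ^ 2) :
    IsGLB {r : ℝ | ∃ v : V, v ≠ 0 ∧ r = L v} (min (ev k) (ev ⟨0, hn⟩ + β)) := by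
  set m := min (ev k) (ev ⟨0, hn⟩ + β) with hm
  have hb : ∀ i j : Fin n, (inner ℝ (b i) (b j) : ℝ) = if i = j then 1 else 0 := by
    intro i j
    rcases eq_or_ne i j with rfl | h
    · simp [b.orthonormal.1 i, real_inner_self_eq_norm_sq]
    · simp [h, b.orthonormal.2 h]
  -- key expansions
  have hTv : ∀ v : V, (inner ℝ (T v) v : ℝ) = ∑ i, ev i * (inner ℝ v (b i) : ℝ) ^ 2 := by
    intro v
    rw [← b.sum_inner_mul_inner (T v) v]
    refine Finset.sum_congr rfl fun i _ => ?_
    rw [hT, heig, inner_smul_right, real_inner_comm (b i) v]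
    ring
  have hnorm : ∀ v : V, ‖v‖ ^ 2 = ∑ i, (inner ℝ v (b i) : ℝ) ^ 2 := by
    intro v
    rw [← real_inner_self_eq_norm_sq, ← b.sum_inner_mul_inner v v]
    refine Finset.sum_congr rfl fun i _ => ?_
    rw [real_inner_comm (b i) v]; ring
  -- value at basis vector
  have hLb : ∀ i : Fin n, L (b i) = ev i + β * (if i < k then 1 else 0) := by
    intro i
    rw [hL]
    have h1 : ‖b i‖ = 1 := b.orthonormal.1 i
    have : (∑ j ∈ Finset.Iio k, (inner ℝ (b i) (b j) : ℝ) ^ 2 / ‖b i‖ ^ 2)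
        = if i < k then 1 else 0 := by
      simp [hb, h1, apply_ite (· ^ 2), Finset.sum_ite_eq, Finset.mem_Iio]
    rw [this, hTv, hnorm]
    congr 1
    simp [hb, apply_ite (· ^ 2), mul_ite, Finset.sum_ite_eq]
  refine IsLeast.isGLB ⟨?_, ?_⟩
  · -- membership: the min is attained
    rcases le_or_gt (ev k) (ev ⟨0, hn⟩ + β) with h | h
    · exact ⟨b k, fun h0 => by simpa [h0] using b.orthonormal.1 k,
        by rw [hLb k]; simp [hm, min_eq_left h]⟩
    · have h0k : (⟨0, hn⟩ : Fin n) < k := by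
        by_contra h'
        have hk0 : k = ⟨0, hn⟩ := le_antisymm (le_of_not_gt h') (by simp [Fin.le_def])
        rw [hk0] at h; linarith
      exact ⟨b ⟨0, hn⟩, fun h0 => by simpa [h0] using b.orthonormal.1 ⟨0, hn⟩,
        by rw [hLb ⟨0, hn⟩]; simp [hm, min_eq_right h.le, h0k]⟩
  · -- lower bound
    rintro r ⟨v, hv, rfl⟩
    have hS : (0:ℝ) < ‖v‖ ^ 2 := pow_pos (norm_pos_iff.mpr hv) 2
    have hL' : L v = (∑ i, (ev i + if i < k then β else 0) * (inner ℝ v (b i) : ℝ) ^ 2)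
        / ‖v‖ ^ 2 := by
      rw [hL, hTv, ← Finset.sum_div, ← mul_div_assoc, ← add_div]
      congr 1
      have h1 : β * ∑ j ∈ Finset.Iio k, (inner ℝ v (b j) : ℝ) ^ 2
          = ∑ i, (if i < k then β else 0) * (inner ℝ v (b i) : ℝ) ^ 2 := by
        rw [Finset.mul_sum]
        rw [Finset.sum_congr rfl (fun j hj => by
          simp only [Finset.mem_Iio.mp hj, if_true] :
          ∀ j ∈ Finset.Iio k, β * (inner ℝ v (b j) : ℝ) ^ 2
            = (if j < k then β else 0) * (inner ℝ v (b j) : ℝ) ^ 2)]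
        refine Finset.sum_subset (Finset.subset_univ _) fun i _ hi => ?_
        simp only [Finset.mem_Iio] at hi
        simp [hi]
      rw [h1, ← Finset.sum_add_distrib]
      exact Finset.sum_congr rfl fun i _ => by ring
    rw [hL', le_div_iff₀ hS]
    calc m * ‖v‖ ^ 2 = ∑ i, m * (inner ℝ v (b i) : ℝ) ^ 2 := by
          rw [hnorm, Finset.mul_sum]
      _ ≤ _ := by
          refine Finset.sum_le_sum fun i _ => ?_
          refine mul_le_mul_of_nonneg_right ?_ (sq_nonneg _)
          by_cases hik : i < k
          · have h1 : m ≤ ev ⟨0, hn⟩ + β := min_le_right _ _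
            have h2 : ev ⟨0, hn⟩ ≤ ev i := hmono (by simp [Fin.le_def])
            simp only [hik, if_true]; linarith
          · have h1 : m ≤ ev k := min_le_left _ _
            have h2 := hmono (le_of_not_gt hik)
            simp only [hik, if_false]; linarith
end

section
/- Let V be a finite-dimensional real inner product space of dimension n ≥ 1, let T : V → V be a self-adjoint linear map, and let (u_1, …, u_n) be an orthonormal basis of V with T u_i = λ_i u_i and λ_1 ≤ λ_2 ≤ … ≤ λ_n. Fix 1 ≤ k ≤ n and β ≥ λ_k − λ_1, and for u ≠ 0 define the penalized Rayleigh quotient L_k(u) = ⟨T u, u⟩/‖u‖² + β Σ_{j=1}^{k−1} ⟨u, u_j⟩²/‖u‖². Then L_k(u) ≥ λ_k for every nonzero u ∈ V, and L_k(u_k) = λ_k; hence the minimum of L_k over nonzero vectors equals λ_k and is attained at the k-th eigenvector u_k. -/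
open Finset

/-- For a self-adjoint operator `T` with orthonormal eigenbasis `b` and increasing
eigenvalues `ev`, if the penalty parameter satisfies `β ≥ ev k - ev 0`, then the
penalized Rayleigh quotient `L_k(v) = ⟨Tv,v⟩/‖v‖² + β ∑_{j<k} ⟨v, b j⟫²/‖v‖²` is
bounded below by `ev k` on nonzero vectors, and attains the value `ev k` at the `k`-th
eigenvector `b k`. -/
theorem penalized_rayleigh_quotient_min_attained
    {V : Type*} [NormedAddCommGroup V] [InnerProductSpace ℝ V]
    [FiniteDimensional ℝ V]
    (n : ℕ) (hn : 0 < n) (hdim : Module.finrank ℝ V = n)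
    (T : V →ₗ[ℝ] V)
    (hT : ∀ w v : V, (inner ℝ (T w) v : ℝ) = (inner ℝ w (T v) : ℝ))
    (b : OrthonormalBasis (Fin n) ℝ V) (ev : Fin n → ℝ)
    (heig : ∀ i, T (b i) = ev i • b i) (hmono : Monotone ev)
    (k : Fin n) (β : ℝ) (hβ : ev k - ev ⟨0, hn⟩ ≤ β)
    (L : V → ℝ)
    (hL : ∀ v, L v = (inner ℝ (T v) v : ℝ) / ‖v‖ ^ 2
        + β * ∑ j ∈ Finset.Iio k, (inner ℝ v (b j) : ℝ) ^ 2 / ‖v‖ ^ 2) :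
    (∀ v : V, v ≠ 0 → ev k ≤ L v) ∧ L (b k) = ev k := by
  have key : ∀ v : V, (inner ℝ (T v) v : ℝ) = ∑ i, ev i * (inner ℝ v (b i) : ℝ) ^ 2 := by
    intro v
    rw [← b.sum_inner_mul_inner (T v) v]
    refine Finset.sum_congr rfl fun i _ => ?_
    rw [hT, heig, inner_smul_right, real_inner_comm (b i) v]
    ring
  have hnorm : ∀ v : V, ‖v‖ ^ 2 = ∑ i, (inner ℝ v (b i) : ℝ) ^ 2 := by
    intro v
    rw [← real_inner_self_eq_norm_sq, ← b.sum_inner_mul_inner v v]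
    refine Finset.sum_congr rfl fun i _ => ?_
    rw [real_inner_comm (b i) v]; ring
  constructor
  · intro v hv
    have hpos : (0 : ℝ) < ‖v‖ ^ 2 := pow_pos (norm_pos_iff.mpr hv) 2
    rw [hL, key]
    have hrw : β * ∑ j ∈ Finset.Iio k, (inner ℝ v (b j) : ℝ) ^ 2 / ‖v‖ ^ 2
        = (∑ i, (if i ∈ Finset.Iio k then β else 0) * (inner ℝ v (b i) : ℝ) ^ 2) / ‖v‖ ^ 2 := by
      have he : ∀ i : Fin n, (if i ∈ Finset.Iio k then β else 0) * (inner ℝ v (b i) : ℝ) ^ 2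
          = if i ∈ Finset.Iio k then β * (inner ℝ v (b i) : ℝ) ^ 2 else 0 := fun i => by
        split <;> simp
      simp_rw [he, Finset.sum_ite_mem, Finset.univ_inter, Finset.sum_div, Finset.mul_sum,
        mul_div_assoc]
    rw [hrw, ← add_div, le_div_iff₀ hpos]
    calc ev k * ‖v‖ ^ 2 = ∑ i, ev k * (inner ℝ v (b i) : ℝ) ^ 2 := by
          rw [hnorm, Finset.mul_sum]
      _ ≤ ∑ i, (ev i + (if i ∈ Finset.Iio k then β else 0)) * (inner ℝ v (b i) : ℝ) ^ 2 := by
          refine Finset.sum_le_sum fun i _ => ?_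
          refine mul_le_mul_of_nonneg_right ?_ (by positivity)
          by_cases hik : i ∈ Finset.Iio k
          · simp only [hik, if_pos]
            have h0 : ev ⟨0, hn⟩ ≤ ev i := hmono (by simp [Fin.le_def])
            linarith
          · simp only [hik, if_neg, not_false_iff, add_zero]
            exact hmono (le_of_not_gt (by simpa using hik))
      _ = ∑ i, (ev i * (inner ℝ v (b i) : ℝ) ^ 2
            + (if i ∈ Finset.Iio k then β else 0) * (inner ℝ v (b i) : ℝ) ^ 2) := by
          refine Finset.sum_congr rfl fun i _ => ?_; ring
      _ = _ := by rw [Finset.sum_add_distrib]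
  · rw [hL, key]
    have hob := b.orthonormal
    have h1 : ∀ i, (inner ℝ (b k) (b i) : ℝ) ^ 2 = if k = i then 1 else 0 := by
      intro i
      rcases eq_or_ne k i with h | h
      · subst h
        rw [real_inner_self_eq_norm_sq, hob.1 k]
        simp
      · rw [hob.2 h]
        simp [h]
    have hnk : ‖b k‖ ^ 2 = 1 := by rw [b.orthonormal.1 k]; norm_num
    rw [hnk]
    have h2 : ∑ i, ev i * (inner ℝ (b k) (b i) : ℝ) ^ 2 = ev k := by
      simp [h1, mul_ite, Finset.sum_ite_eq]
    have h3 : ∑ j ∈ Finset.Iio k, (inner ℝ (b k) (b j) : ℝ) ^ 2 / (1 : ℝ) = 0 := by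
      refine Finset.sum_eq_zero fun j hj => ?_
      rw [h1 j, if_neg (by simp at hj; omega)]
      simp
    rw [h2, h3]
    simp
end
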